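/- For every 1 ≤ i < p, one has i!·g_i = g₁^i, the i-fold composite g₁ ∘ g₁ ∘ ⋯ ∘ g₁; equivalently g_i = g₁^i / i!. (Proposition 3.1(e).) -/

import Mathlib

open Finset Polynomial in
private lemma unique_aux (p : ℕ) [Fact p.Prime] (M : Type*) [AddCommGroup M] [Module (ZMod p) M]
    (c : ℕ → M) (h : ∀ n : ℕ, ∑ i ∈ Finset.range p, ((n : ZMod p)) ^ i • c i = 0) :
    ∀ j < p, c j = 0 := by
  intro j hj
  rw [← Module.forall_dual_apply_eq_zero_iff (ZMod p)]
  intro φ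
  set P : Polynomial (ZMod p) := ∑ i ∈ Finset.range p, Polynomial.C (φ (c i)) * Polynomial.X ^ i
    with hP
  have heval : ∀ x : ZMod p, P.eval x = 0 := by
    intro x
    obtain ⟨n, rfl⟩ := ZMod.natCast_zmod_surjective (n := p) x
    have hx := congrArg φ (h n)
    simp only [map_sum, map_smul, map_zero, smul_eq_mul] at hx
    simp only [hP, eval_finset_sum, eval_mul, eval_C, eval_pow, eval_X]
    rw [← hx]
    exact Finset.sum_congr rfl fun i _ => mul_comm _ _
  have hdeg : P.natDegree < p := by
    have : P.natDegree ≤ p - 1 := by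
      apply Polynomial.natDegree_sum_le_of_forall_le
      intro i hi
      exact (Polynomial.natDegree_C_mul_X_pow_le _ _).trans (by
        simp only [Finset.mem_range] at hi; omega)
    have hp1 : 0 < p := (Fact.out : p.Prime).pos
    omega
  have hP0 : P = 0 := by
    apply Polynomial.eq_zero_of_natDegree_lt_card_of_eval_eq_zero P
      (f := (id : ZMod p → ZMod p)) Function.injective_id heval
    simpa [ZMod.card] using hdeg
  have : P.coeff j = φ (c j) := by
    simp only [hP, Polynomial.finset_sum_coeff, Polynomial.coeff_C_mul, Polynomial.coeff_X_pow]
    rw [Finset.sum_eq_single j]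
    · simp
    · intro b _ hb; simp [Ne.symm hb]
    · intro hjj; exact absurd (Finset.mem_range.mpr hj) hjj
  rw [← this, hP0, Polynomial.coeff_zero]

private lemma unique_exp (p : ℕ) [Fact p.Prime] (M : Type*) [AddCommGroup M] [Module (ZMod p) M]
    (c d : ℕ → M)
    (h : ∀ n : ℕ, ∑ i ∈ Finset.range p, ((n : ZMod p)) ^ i • c i
        = ∑ i ∈ Finset.range p, ((n : ZMod p)) ^ i • d i) :
    ∀ j < p, c j = d j := by
  intro j hj
  have := unique_aux p M (fun i => c i - d i) (fun n => by
    simp only [smul_sub, Finset.sum_sub_distrib, h n, sub_self]) j hj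
  exact sub_eq_zero.mp this

/-- **Proposition 3.1 (e).** With `g` and the unique coefficient maps `g_i` as in
Proposition 3.1, for `1 ≤ i < p` one has `i!·g_i = g₁^i` (the `i`-fold composite of `g₁`);
equivalently `g_i = g₁^i / i!`. -/
theorem stmt_7 (p : ℕ) [Fact p.Prime] (hp : 2 < p)
    (M : Type*) [AddCommGroup M] [Module (ZMod p) M]
    (g : M →ₗ[ZMod p] M) (hgp : g ^ p = 1)
    (gc : ℕ → M → M)
    (hgc : ∀ m : M, ∀ n : ℕ,
      (g ^ n) m = m + ∑ i ∈ Finset.Ico 1 p, ((n : ZMod p)) ^ i • gc i m) :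
    ∀ i : ℕ, 1 ≤ i → i < p → ∀ m : M,
      (Nat.factorial i : ZMod p) • gc i m = (gc 1)^[i] m := by
  have hp0 : 0 < p := by omega
  set E : M → ℕ → M := fun m i => if i = 0 then m else gc i m with hE
  -- full expansion over range p
  have hfull : ∀ (m : M) (n : ℕ),
      (g ^ n) m = ∑ i ∈ Finset.range p, ((n : ZMod p)) ^ i • E m i := by
    intro m n
    rw [hgc m n, Finset.range_eq_Ico, Finset.sum_eq_sum_Ico_succ_bot hp0]
    simp only [hE, if_pos rfl, pow_zero, one_smul]
    congr 1
    refine Finset.sum_congr rfl fun i hi => ?_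
    rw [if_neg (by simp only [Finset.mem_Ico] at hi; omega)]
  -- linearity of gc i for 1 ≤ i < p
  have hadd : ∀ i, 1 ≤ i → i < p → ∀ a b : M, gc i (a + b) = gc i a + gc i b := by
    intro i h1 h2 a b
    have h := unique_exp p M (E (a + b)) (fun j => E a j + E b j) ?_ i h2
    · simpa only [hE, if_neg (by omega : ¬ i = 0)] using h
    · intro n
      rw [← hfull, map_add, hfull, hfull, ← Finset.sum_add_distrib]
      exact Finset.sum_congr rfl fun j _ => (smul_add _ _ _).symm
  have hsmul : ∀ i, 1 ≤ i → i < p → ∀ (r : ZMod p) (a : M), gc i (r • a) = r • gc i a := by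
    intro i h1 h2 r a
    have h := unique_exp p M (E (r • a)) (fun j => r • E a j) ?_ i h2
    · simpa only [hE, if_neg (by omega : ¬ i = 0)] using h
    · intro n
      rw [← hfull, map_smul, hfull, Finset.smul_sum]
      exact Finset.sum_congr rfl fun j _ => smul_comm _ _ _
  -- gc 1 as a linear map
  set G1 : M →ₗ[ZMod p] M :=
    { toFun := gc 1
      map_add' := hadd 1 le_rfl (by omega)
      map_smul' := hsmul 1 le_rfl (by omega) } with hG1
  have hG1a : ∀ m : M, G1 m = gc 1 m := fun m => rfl
  -- star: gc 1 (g^k m)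
  have hstar : ∀ (m : M) (k : ℕ), gc 1 ((g ^ k) m)
      = ∑ i ∈ Finset.range p, (((i.choose 1 : ℕ) : ZMod p) * ((k : ZMod p)) ^ (i - 1)) • E m i := by
    intro m k
    have h := unique_exp p M (E ((g ^ k) m))
      (fun j => ∑ i ∈ Finset.range p,
        (((i.choose j : ℕ) : ZMod p) * ((k : ZMod p)) ^ (i - j)) • E m i) ?_ 1 (by omega)
    · simpa only [hE, if_neg one_ne_zero] using h
    · intro n
      rw [← hfull]
      have h1 : (g ^ n) ((g ^ k) m) = (g ^ (n + k)) m := by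
        rw [pow_add, Module.End.mul_apply]
      rw [h1, hfull]
      have hcast : ((n + k : ℕ) : ZMod p) = (n : ZMod p) + (k : ZMod p) := by push_cast; ring
      rw [hcast]
      -- binomial expansion with extended range
      have hbin : ∀ i ∈ Finset.range p,
          ((n : ZMod p) + (k : ZMod p)) ^ i
            = ∑ j ∈ Finset.range p,
                ((i.choose j : ℕ) : ZMod p) * (n : ZMod p) ^ j * (k : ZMod p) ^ (i - j) := by
        intro i hi
        rw [add_pow]
        rw [Finset.sum_subset (Finset.range_subset_range.mpr (Finset.mem_range.mp hi))]
        · exact Finset.sum_congr rfl fun j _ => by ring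
        · intro j _ hj
          simp only [Finset.mem_range, not_lt] at hj
          rw [Nat.choose_eq_zero_of_lt (by omega)]
          simp
      calc ∑ i ∈ Finset.range p, ((n : ZMod p) + (k : ZMod p)) ^ i • E m i
          = ∑ i ∈ Finset.range p, ∑ j ∈ Finset.range p,
              ((n : ZMod p)) ^ j • ((((i.choose j : ℕ) : ZMod p) * (k : ZMod p) ^ (i - j)) • E m i) := by
            refine Finset.sum_congr rfl fun i hi => ?_
            rw [hbin i hi, Finset.sum_smul]
            refine Finset.sum_congr rfl fun j _ => ?_
            rw [smul_smul]; ring_nf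
        _ = ∑ j ∈ Finset.range p, ((n : ZMod p)) ^ j •
              ∑ i ∈ Finset.range p, ((((i.choose j : ℕ) : ZMod p) * (k : ZMod p) ^ (i - j)) • E m i) := by
            rw [Finset.sum_comm]
            exact Finset.sum_congr rfl fun j _ => (Finset.smul_sum).symm
  -- key relation: gc 1 (gc j m) = (j+1) • gc (j+1) m
  have hC : ∀ j, 1 ≤ j → j + 1 < p → ∀ m : M,
      gc 1 (gc j m) = ((j + 1 : ℕ) : ZMod p) • gc (j + 1) m := by
    intro j hj1 hjp m
    have h := unique_exp p M
      (fun t => ((t + 1 : ℕ) : ZMod p) • gc (t + 1) m)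
      (fun t => gc 1 (E m t)) ?_ j (by omega)
    · symm
      simpa only [hE, if_neg (by omega : ¬ j = 0)] using h
    · intro k
      have hrhs : ∑ t ∈ Finset.range p, ((k : ZMod p)) ^ t • gc 1 (E m t)
          = gc 1 ((g ^ k) m) := by
        rw [hfull]
        rw [show (gc 1 (∑ i ∈ Finset.range p, ((k : ZMod p)) ^ i • E m i))
            = G1 (∑ i ∈ Finset.range p, ((k : ZMod p)) ^ i • E m i) from rfl]
        rw [map_sum]
        exact Finset.sum_congr rfl fun t _ => by rw [map_smul]; rfl
      rw [hrhs, hstar]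
      have hlast : ((p - 1 + 1 : ℕ) : ZMod p) = 0 := by
        rw [show p - 1 + 1 = p by omega, ZMod.natCast_self]
      have drop : ∀ F : ℕ → M, F (p - 1) = 0 →
          ∑ i ∈ Finset.range p, F i = ∑ i ∈ Finset.range (p - 1), F i := by
        intro F hF
        conv_lhs => rw [show p = (p - 1) + 1 by omega]
        rw [Finset.sum_range_succ, hF, add_zero]
      have shift : ∀ F : ℕ → M, F 0 = 0 →
          ∑ i ∈ Finset.range p, F i = ∑ i ∈ Finset.range (p - 1), F (i + 1) := by
        intro F hF
        conv_lhs => rw [show p = (p - 1) + 1 by omega]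
        rw [Finset.sum_range_succ', hF, add_zero]
      rw [drop _ (by rw [hlast, zero_smul, smul_zero]),
        shift _ (by simp)]
      refine Finset.sum_congr rfl fun t ht => ?_
      have ht' : ¬ (t + 1 = 0) := by omega
      simp only [hE, if_neg ht', Nat.choose_one_right, Nat.add_sub_cancel]
      rw [smul_smul]
      ring_nf
  -- final induction
  intro i hi
  induction i, hi using Nat.le_induction with
  | base =>
    intro _ m
    simp [Nat.factorial]
  | succ n hn ih =>
    intro hnp m
    have h1 : n < p := by omega
    rw [Function.iterate_succ_apply', ← ih h1 m, ← hG1a, map_smul, hG1a, hC n hn hnp m,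
      smul_smul, Nat.factorial_succ]
    push_cast
    ring_nf
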